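/- arXiv:2304.09154 — 2 statements merged into one kernel-verified Lean document; each statement's English description precedes it below -/
import Mathlib

section
/- Let X_1,…,X_n be i.i.d. from a distribution P on ℝ^d, and let μ* ∈ ℝ^d with ||μ*|| ≤ n^{−1/4}. Then for any Borel measurable test ψ : (ℝ^d)^n → {0,1} of the null hypothesis H_0 : P = N_d(0, I_d) against the alternative H_1 : P = (1/2)N_d(μ*, I_d) + (1/2)N_d(−μ*, I_d), the sum of error probabilities satisfies P_{H_0}(ψ(X_1,…,X_n) = 1) + P_{H_1}(ψ(X_1,…,X_n) = 0) > 1/2. -/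
open MeasureTheory

/-- The `d`-dimensional Gaussian distribution `N_d(m, I_d)`, defined via its Lebesgue density. -/
noncomputable def gaussianId (d : ℕ) (m : EuclideanSpace ℝ (Fin d)) :
    Measure (EuclideanSpace ℝ (Fin d)) :=
  volume.withDensity fun x =>
    ENNReal.ofReal ((2 * Real.pi) ^ (-(d : ℝ) / 2) * Real.exp (-‖x - m‖ ^ 2 / 2))

/-- The two-component Gaussian mixture `(1/2) N_d(μ*, I_d) + (1/2) N_d(−μ*, I_d)`. -/
noncomputable def gaussianMixture (d : ℕ) (m : EuclideanSpace ℝ (Fin d)) :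
    Measure (EuclideanSpace ℝ (Fin d)) :=
  ((1 : ENNReal) / 2) • gaussianId d m + ((1 : ENNReal) / 2) • gaussianId d (-m)

open Real ENNReal
open scoped RealInnerProductSpace

section Aux

theorem lintegral_pi_prod {n : ℕ} {α : Type*} [MeasurableSpace α] (μ : Measure α)
    [SigmaFinite μ] (f : Fin n → α → ENNReal) (hf : ∀ i, Measurable (f i)) :
    ∫⁻ x : Fin n → α, ∏ i, f i (x i) ∂(Measure.pi fun _ => μ) = ∏ i, ∫⁻ x, f i x ∂μ := by
  induction n with
  | zero => simp [lintegral_const, Measure.pi_univ]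
  | succ n ih =>
    have hmp := (measurePreserving_piFinSuccAbove (fun _ : Fin (n+1) => μ) 0).symm
    have hmeas : Measurable fun x : Fin (n+1) → α => ∏ i, f i (x i) :=
      Finset.measurable_prod _ fun i _ => (hf i).comp (measurable_pi_apply i)
    rw [← hmp.lintegral_comp hmeas]
    have h2 : ∀ z : α × (Fin n → α),
        (∏ i, f i ((MeasurableEquiv.piFinSuccAbove (fun _ => α) 0).symm z i))
          = f 0 z.1 * ∏ i : Fin n, f i.succ (z.2 i) := by
      intro z
      rw [Fin.prod_univ_succ]
      simp [MeasurableEquiv.piFinSuccAbove_symm_apply, Fin.zero_succAbove]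
    simp_rw [h2]
    have := lintegral_prod_mul (μ := μ) (ν := Measure.pi fun _ : Fin n => μ)
      (f := f 0) (g := fun y : Fin n → α => ∏ i : Fin n, f i.succ (y i))
      ((hf 0).aemeasurable)
      ((Finset.measurable_prod _ fun i _ => (hf i.succ).comp (measurable_pi_apply i)).aemeasurable)
    rw [this, ih (fun i => f i.succ) (fun i => hf i.succ), Fin.prod_univ_succ]

theorem gauss_one_dim : ∫⁻ y : ℝ, ENNReal.ofReal ((2 * π) ^ (-(1:ℝ)/2) * rexp (-y ^ 2 / 2)) = 1 := by
  have hint : Integrable (fun y : ℝ => (2 * π) ^ (-(1:ℝ)/2) * rexp (-y ^ 2 / 2)) := by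
    have : Integrable (fun y : ℝ => rexp (-(1/2) * y ^ 2)) := integrable_exp_neg_mul_sq (by norm_num)
    simpa [neg_div, neg_mul, mul_comm, div_eq_mul_inv, mul_assoc] using
      this.const_mul ((2 * π) ^ (-(1:ℝ)/2))
  rw [← ofReal_integral_eq_lintegral_ofReal hint]
  · rw [integral_const_mul]
    have : ∫ y : ℝ, rexp (-y ^ 2 / 2) = √(2 * π) := by
      have := integral_gaussian (1/2)
      simp only [neg_div, neg_mul, mul_comm] at this ⊢
      rw [show (fun y : ℝ => rexp (-(y ^ 2 / 2))) = fun y : ℝ => rexp (-(y ^ 2 * (1/2))) by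
        funext y; ring_nf]
      rw [show (π / (1/2) : ℝ) = 2 * π by ring] at this
      simpa [mul_comm] using this
    rw [this]
    have h2π : (0:ℝ) < 2 * π := by positivity
    rw [sqrt_eq_rpow, ← Real.rpow_add h2π]
    norm_num
  · filter_upwards with y
    positivity

theorem gauss_norm (d : ℕ) (m : EuclideanSpace ℝ (Fin d)) :
    ∫⁻ x : EuclideanSpace ℝ (Fin d),
      ENNReal.ofReal ((2 * π) ^ (-(d : ℝ) / 2) * rexp (-‖x - m‖ ^ 2 / 2)) = 1 := by
  have htrans : ∫⁻ x : EuclideanSpace ℝ (Fin d),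
      ENNReal.ofReal ((2 * π) ^ (-(d : ℝ) / 2) * rexp (-‖x - m‖ ^ 2 / 2))
      = ∫⁻ x : EuclideanSpace ℝ (Fin d),
      ENNReal.ofReal ((2 * π) ^ (-(d : ℝ) / 2) * rexp (-‖x‖ ^ 2 / 2)) := by
    have := lintegral_add_right_eq_self
      (μ := (volume : Measure (EuclideanSpace ℝ (Fin d))))
      (fun y => ENNReal.ofReal ((2 * π) ^ (-(d : ℝ) / 2) * rexp (-‖y‖ ^ 2 / 2))) (-m)
    simp only [← sub_eq_add_neg] at this
    exact this
  rw [htrans]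
  have hmp := EuclideanSpace.volume_preserving_symm_measurableEquiv_toLp (Fin d)
  set c : ℝ := (2 * π) ^ (-(1:ℝ)/2) with hc
  have hcpow : (2 * π) ^ (-(d : ℝ) / 2) = c ^ d := by
    rw [hc, ← Real.rpow_natCast ((2*π) ^ (-(1:ℝ)/2)) d, ← Real.rpow_mul (by positivity)]
    ring_nf
  have hnorm : ∀ x : EuclideanSpace ℝ (Fin d), ‖x‖ ^ 2 = ∑ i, x i ^ 2 := by
    intro x
    rw [EuclideanSpace.norm_eq, sq_sqrt (by positivity)]
    simp [sq_abs]
  have key : ∀ x : EuclideanSpace ℝ (Fin d),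
      ENNReal.ofReal ((2 * π) ^ (-(d : ℝ) / 2) * rexp (-‖x‖ ^ 2 / 2))
        = ∏ i, ENNReal.ofReal (c * rexp (-(x i) ^ 2 / 2)) := by
    intro x
    rw [hnorm, hcpow]
    rw [← ENNReal.ofReal_prod_of_nonneg (by intro i _; positivity)]
    congr 1
    rw [Finset.prod_mul_distrib, Finset.prod_const, Finset.card_univ, Fintype.card_fin]
    congr 1
    rw [← Real.exp_sum]
    congr 1
    rw [← Finset.sum_div, ← Finset.sum_neg_distrib]
  simp_rw [key]
  have hmeas1 : Measurable fun y : ℝ => ENNReal.ofReal (c * rexp (-y ^ 2 / 2)) := by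
    fun_prop
  calc ∫⁻ x : EuclideanSpace ℝ (Fin d), ∏ i, ENNReal.ofReal (c * rexp (-(x i) ^ 2 / 2))
      = ∫⁻ y : Fin d → ℝ, ∏ i, ENNReal.ofReal (c * rexp (-(y i) ^ 2 / 2)) ∂(volume) := by
        exact hmp.lintegral_comp (f := fun y : Fin d → ℝ =>
          ∏ i, ENNReal.ofReal (c * rexp (-(y i) ^ 2 / 2)))
          (Finset.measurable_prod _ fun i _ => hmeas1.comp (measurable_pi_apply i))
    _ = ∏ i : Fin d, ∫⁻ y : ℝ, ENNReal.ofReal (c * rexp (-y ^ 2 / 2)) := by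
        rw [volume_pi]
        exact lintegral_pi_prod volume _ (fun i => hmeas1)
    _ = 1 := by
        rw [hc, gauss_one_dim, Finset.prod_const_one]

variable {d : ℕ}

theorem meas_ofReal_exp_inner (m : EuclideanSpace ℝ (Fin d)) (r : ℝ) :
    Measurable fun x : EuclideanSpace ℝ (Fin d) => ENNReal.ofReal (rexp (⟪x, m⟫ + r)) :=
  ENNReal.measurable_ofReal.comp (Real.measurable_exp.comp
    ((continuous_id.inner continuous_const).measurable.add_const r))

theorem gaussianId_dens_measurable (m : EuclideanSpace ℝ (Fin d)) :
    Measurable fun x : EuclideanSpace ℝ (Fin d) =>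
      ENNReal.ofReal ((2 * π) ^ (-(d : ℝ) / 2) * rexp (-‖x - m‖ ^ 2 / 2)) := by
  fun_prop

instance isProbabilityMeasure_gaussianId (m : EuclideanSpace ℝ (Fin d)) :
    IsProbabilityMeasure (gaussianId d m) := by
  constructor
  rw [gaussianId, withDensity_apply _ MeasurableSet.univ, setLIntegral_univ]
  exact gauss_norm d m

theorem exp_tilt (m : EuclideanSpace ℝ (Fin d)) (r : ℝ) (x : EuclideanSpace ℝ (Fin d)) :
    ENNReal.ofReal ((2 * π) ^ (-(d : ℝ) / 2) * rexp (-‖x - 0‖ ^ 2 / 2))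
      * ENNReal.ofReal (rexp (⟪x, m⟫ + r))
    = ENNReal.ofReal (rexp (‖m‖ ^ 2 / 2 + r))
      * ENNReal.ofReal ((2 * π) ^ (-(d : ℝ) / 2) * rexp (-‖x - m‖ ^ 2 / 2)) := by
  rw [← ENNReal.ofReal_mul (by positivity), ← ENNReal.ofReal_mul (by positivity)]
  congr 1
  rw [sub_zero, mul_assoc, ← Real.exp_add, mul_comm (rexp (‖m‖^2/2 + r)), mul_assoc, ← Real.exp_add]
  congr 2
  have : ‖x - m‖ ^ 2 = ‖x‖ ^ 2 - 2 * ⟪x, m⟫ + ‖m‖ ^ 2 := norm_sub_sq_real x m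
  linarith

theorem gaussianId_lintegral_exp (m : EuclideanSpace ℝ (Fin d)) (r : ℝ) :
    ∫⁻ x, ENNReal.ofReal (rexp (⟪x, m⟫ + r)) ∂(gaussianId d 0)
      = ENNReal.ofReal (rexp (‖m‖ ^ 2 / 2 + r)) := by
  rw [gaussianId, lintegral_withDensity_eq_lintegral_mul _ (gaussianId_dens_measurable 0)
    (meas_ofReal_exp_inner m r)]
  simp only [Pi.mul_apply, exp_tilt m r]
  rw [lintegral_const_mul _ (gaussianId_dens_measurable m), gauss_norm, mul_one]

theorem gaussianId_eq_withDensity (m : EuclideanSpace ℝ (Fin d)) :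
    gaussianId d m = (gaussianId d 0).withDensity
      (fun x => ENNReal.ofReal (rexp (⟪x, m⟫ - ‖m‖ ^ 2 / 2))) := by
  have hmeas : Measurable fun x : EuclideanSpace ℝ (Fin d) =>
      ENNReal.ofReal (rexp (⟪x, m⟫ - ‖m‖ ^ 2 / 2)) := by
    simpa [sub_eq_add_neg] using meas_ofReal_exp_inner m (-(‖m‖ ^ 2 / 2))
  rw [gaussianId, gaussianId, ← withDensity_mul _ (gaussianId_dens_measurable 0) hmeas]
  congr 1
  funext x
  have h := exp_tilt m (-(‖m‖ ^ 2 / 2)) x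
  rw [show ‖m‖ ^ 2 / 2 + -(‖m‖ ^ 2 / 2) = 0 by ring, Real.exp_zero, ENNReal.ofReal_one,
    one_mul] at h
  rw [Pi.mul_apply, show (⟪x, m⟫ - ‖m‖ ^ 2 / 2 : ℝ) = ⟪x, m⟫ + -(‖m‖ ^ 2 / 2) from
    sub_eq_add_neg _ _]
  exact h.symm

end Aux
section Mixture

variable {d : ℕ}

theorem ofReal_half (z : ℝ) : ENNReal.ofReal (z / 2) = 2⁻¹ * ENNReal.ofReal z := by
  rw [div_eq_mul_inv, ENNReal.ofReal_mul' (by norm_num), ENNReal.ofReal_inv_of_pos (by norm_num)]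
  norm_num
  ring

theorem ofReal_quarter (z : ℝ) : ENNReal.ofReal (z / 4) = 4⁻¹ * ENNReal.ofReal z := by
  rw [div_eq_mul_inv, ENNReal.ofReal_mul' (by norm_num), ENNReal.ofReal_inv_of_pos (by norm_num)]
  norm_num
  ring

/-- The density of the Gaussian mixture w.r.t. the standard Gaussian. -/
noncomputable def gdens (μ : EuclideanSpace ℝ (Fin d)) (x : EuclideanSpace ℝ (Fin d)) : ℝ :=
  (rexp (⟪x, μ⟫ - ‖μ‖ ^ 2 / 2) + rexp (⟪x, -μ⟫ - ‖μ‖ ^ 2 / 2)) / 2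

theorem gdens_nonneg (μ x : EuclideanSpace ℝ (Fin d)) : 0 ≤ gdens μ x := by
  unfold gdens; positivity

theorem gdens_measurable (μ : EuclideanSpace ℝ (Fin d)) :
    Measurable fun x => ENNReal.ofReal (gdens μ x) := by
  apply ENNReal.measurable_ofReal.comp
  apply Measurable.div_const
  apply Measurable.add
  · exact Real.measurable_exp.comp
      ((continuous_id.inner continuous_const).measurable.sub_const _)
  · exact Real.measurable_exp.comp
      ((continuous_id.inner continuous_const).measurable.sub_const _)

theorem gdens_pointwise (μ x : EuclideanSpace ℝ (Fin d)) :
    ENNReal.ofReal (gdens μ x)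
      = 2⁻¹ * ENNReal.ofReal (rexp (⟪x, μ⟫ - ‖μ‖ ^ 2 / 2))
        + 2⁻¹ * ENNReal.ofReal (rexp (⟪x, -μ⟫ - ‖μ‖ ^ 2 / 2)) := by
  rw [gdens, ofReal_half, ENNReal.ofReal_add (by positivity) (by positivity)]
  ring

theorem gaussianMixture_eq_withDensity (μ : EuclideanSpace ℝ (Fin d)) :
    gaussianMixture d μ
      = (gaussianId d 0).withDensity (fun x => ENNReal.ofReal (gdens μ x)) := by
  have hm : ∀ m : EuclideanSpace ℝ (Fin d),
      Measurable fun x : EuclideanSpace ℝ (Fin d) =>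
        ENNReal.ofReal (rexp (⟪x, m⟫ - ‖m‖ ^ 2 / 2)) := fun m => by
    simpa [sub_eq_add_neg] using meas_ofReal_exp_inner m (-(‖m‖ ^ 2 / 2))
  rw [gaussianMixture, gaussianId_eq_withDensity μ, gaussianId_eq_withDensity (-μ)]
  rw [← withDensity_smul _ (hm μ), ← withDensity_smul _ (hm (-μ)),
    ← withDensity_add_left (((hm μ).const_smul ((1:ENNReal)/2)) :
      Measurable (((1:ENNReal)/2) • fun x : EuclideanSpace ℝ (Fin d) =>
        ENNReal.ofReal (rexp (⟪x, μ⟫ - ‖μ‖ ^ 2 / 2))))]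
  congr 1
  funext x
  simp only [Pi.add_apply, Pi.smul_apply, smul_eq_mul, norm_neg]
  rw [gdens_pointwise]
  rw [one_div]

/-- MGF-type formula, subtraction form. -/
theorem gaussianId_lintegral_exp' (m : EuclideanSpace ℝ (Fin d)) (r : ℝ) :
    ∫⁻ x, ENNReal.ofReal (rexp (⟪x, m⟫ - r)) ∂(gaussianId d 0)
      = ENNReal.ofReal (rexp (‖m‖ ^ 2 / 2 - r)) := by
  simp only [sub_eq_add_neg]
  exact gaussianId_lintegral_exp m (-r)

theorem lintegral_gdens (μ : EuclideanSpace ℝ (Fin d)) :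
    ∫⁻ x, ENNReal.ofReal (gdens μ x) ∂(gaussianId d 0) = 1 := by
  simp_rw [gdens_pointwise]
  rw [lintegral_add_left (by
    exact (Measurable.const_mul (by
      simpa [sub_eq_add_neg] using meas_ofReal_exp_inner μ (-(‖μ‖ ^ 2 / 2))) _))]
  rw [lintegral_const_mul _ (by
      simpa [sub_eq_add_neg] using meas_ofReal_exp_inner μ (-(‖μ‖ ^ 2 / 2))),
    lintegral_const_mul _ (by
      simpa [sub_eq_add_neg] using meas_ofReal_exp_inner (-μ) (-(‖μ‖ ^ 2 / 2)))]
  rw [gaussianId_lintegral_exp' μ, gaussianId_lintegral_exp' (-μ)]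
  rw [norm_neg, sub_self, Real.exp_zero, ENNReal.ofReal_one]
  rw [mul_one]
  rw [ENNReal.inv_two_add_inv_two]

end Mixture
section Sq
variable {d : ℕ}

theorem gdens_sq_pointwise (μ x : EuclideanSpace ℝ (Fin d)) :
    gdens μ x ^ 2
      = (rexp (⟪x, (2:ℝ) • μ⟫ - ‖μ‖ ^ 2) + rexp (⟪x, (-2:ℝ) • μ⟫ - ‖μ‖ ^ 2)
          + 2 * rexp (-‖μ‖ ^ 2)) / 4 := by
  rw [gdens, real_inner_smul_right, real_inner_smul_right, inner_neg_right]
  set p := ⟪x, μ⟫ with hp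
  set t := ‖μ‖ ^ 2 with ht
  have hu : rexp (p - t/2) ^ 2 = rexp (2 * p - t) := by
    rw [← Real.exp_nat_mul]; norm_num; ring_nf
  have hv : rexp (-p - t/2) ^ 2 = rexp (-2 * p - t) := by
    rw [← Real.exp_nat_mul]; norm_num; ring_nf
  have huv : rexp (p - t/2) * rexp (-p - t/2) = rexp (-t) := by
    rw [← Real.exp_add]; ring_nf
  have : ((rexp (p - t/2) + rexp (-p - t/2)) / 2) ^ 2
      = (rexp (p - t/2) ^ 2 + rexp (-p - t/2) ^ 2
          + 2 * (rexp (p - t/2) * rexp (-p - t/2))) / 4 := by ring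
  rw [this, hu, hv, huv]

theorem lintegral_gdens_sq (μ : EuclideanSpace ℝ (Fin d)) :
    ∫⁻ x, ENNReal.ofReal (gdens μ x) ^ 2 ∂(gaussianId d 0)
      = ENNReal.ofReal (Real.cosh (‖μ‖ ^ 2)) := by
  have hmeas : ∀ (m : EuclideanSpace ℝ (Fin d)) (r : ℝ),
      Measurable fun x : EuclideanSpace ℝ (Fin d) =>
        ENNReal.ofReal (rexp (⟪x, m⟫ - r)) := fun m r => by
    simpa [sub_eq_add_neg] using meas_ofReal_exp_inner m (-r)
  have hpt : ∀ x, ENNReal.ofReal (gdens μ x) ^ 2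
      = 4⁻¹ * (ENNReal.ofReal (rexp (⟪x, (2:ℝ) • μ⟫ - ‖μ‖ ^ 2))
          + ENNReal.ofReal (rexp (⟪x, (-2:ℝ) • μ⟫ - ‖μ‖ ^ 2))
          + ENNReal.ofReal (2 * rexp (-‖μ‖ ^ 2))) := by
    intro x
    rw [← ENNReal.ofReal_pow (gdens_nonneg μ x), gdens_sq_pointwise, ofReal_quarter,
      ENNReal.ofReal_add (by positivity) (by positivity),
      ENNReal.ofReal_add (by positivity) (by positivity)]
  simp_rw [hpt]
  rw [lintegral_const_mul _ (by
    exact ((hmeas _ _).add (hmeas _ _)).add measurable_const)]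
  rw [lintegral_add_right _ measurable_const,
    lintegral_add_left (hmeas _ _),
    gaussianId_lintegral_exp' ((2:ℝ) • μ), gaussianId_lintegral_exp' ((-2:ℝ) • μ),
    lintegral_const, measure_univ, mul_one]
  have hn2 : ‖(2:ℝ) • μ‖ ^ 2 / 2 - ‖μ‖ ^ 2 = ‖μ‖ ^ 2 := by
    rw [norm_smul]; simp [mul_pow]; ring
  have hn2' : ‖(-2:ℝ) • μ‖ ^ 2 / 2 - ‖μ‖ ^ 2 = ‖μ‖ ^ 2 := by
    rw [norm_smul]; simp [mul_pow]; ring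
  rw [hn2, hn2']
  rw [← ENNReal.ofReal_add (by positivity) (by positivity),
    ← ENNReal.ofReal_add (by positivity) (by positivity), ← ofReal_quarter]
  congr 1
  rw [Real.cosh_eq]
  rw [show (-‖μ‖^2 : ℝ) = -(‖μ‖^2) by ring]
  ring
end Sq
section Product
variable {d n : ℕ} (μ : EuclideanSpace ℝ (Fin d))

instance isProbabilityMeasure_gaussianMixture (μ : EuclideanSpace ℝ (Fin d)) :
    IsProbabilityMeasure (gaussianMixture d μ) := by
  constructor
  rw [gaussianMixture]
  simp only [Measure.add_apply, Measure.smul_apply, measure_univ, smul_eq_mul, mul_one, one_div]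
  exact ENNReal.inv_two_add_inv_two

theorem pi_mixture_eq_withDensity :
    Measure.pi (fun _ : Fin n => gaussianMixture d μ)
      = (Measure.pi fun _ : Fin n => gaussianId d 0).withDensity
          (fun x => ∏ i, ENNReal.ofReal (gdens μ (x i))) := by
  refine Measure.pi_eq fun s hs => ?_
  rw [withDensity_apply _ (MeasurableSet.univ_pi hs),
    ← lintegral_indicator (MeasurableSet.univ_pi hs)]
  have hind : ∀ x : Fin n → EuclideanSpace ℝ (Fin d),
      (Set.univ.pi s).indicator (fun x => ∏ i, ENNReal.ofReal (gdens μ (x i))) x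
        = ∏ i, (s i).indicator (fun y => ENNReal.ofReal (gdens μ y)) (x i) := by
    intro x
    by_cases hx : x ∈ Set.univ.pi s
    · rw [Set.indicator_of_mem hx]
      exact Finset.prod_congr rfl fun i _ =>
        (Set.indicator_of_mem (hx i (Set.mem_univ i)) (fun y => ENNReal.ofReal (gdens μ y))).symm
    · rw [Set.indicator_of_notMem hx]
      rw [Set.mem_univ_pi] at hx
      push_neg at hx
      obtain ⟨i, hi⟩ := hx
      exact (Finset.prod_eq_zero (Finset.mem_univ i)
        (by rw [Set.indicator_of_notMem hi])).symm
  simp_rw [hind]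
  rw [lintegral_pi_prod _ _ (fun i => (gdens_measurable μ).indicator (hs i))]
  refine Finset.prod_congr rfl fun i _ => ?_
  rw [lintegral_indicator (hs i), gaussianMixture_eq_withDensity,
    withDensity_apply _ (hs i)]

theorem lintegral_pi_gdens :
    ∫⁻ x, (∏ i, ENNReal.ofReal (gdens μ (x i)))
      ∂(Measure.pi fun _ : Fin n => gaussianId d 0) = 1 := by
  rw [lintegral_pi_prod _ _ (fun i => gdens_measurable μ)]
  simp [lintegral_gdens]

theorem lintegral_pi_gdens_sq :
    ∫⁻ x, (∏ i, ENNReal.ofReal (gdens μ (x i))) ^ 2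
      ∂(Measure.pi fun _ : Fin n => gaussianId d 0)
      = ENNReal.ofReal (Real.cosh (‖μ‖ ^ 2)) ^ n := by
  simp_rw [← Finset.prod_pow]
  rw [lintegral_pi_prod _ _ (fun i => (gdens_measurable μ).pow_const 2)]
  simp [lintegral_gdens_sq]
end Product
section Endgame

theorem id_one (a : ℝ) (ha : 0 ≤ a) :
    ENNReal.ofReal (1 - a) + ENNReal.ofReal a = ENNReal.ofReal (a - 1) + 1 := by
  rcases le_total a 1 with h | h
  · have h1 : ENNReal.ofReal (a - 1) = 0 := ENNReal.ofReal_of_nonpos (by linarith)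
    rw [h1, zero_add, ← ENNReal.ofReal_add (by linarith) ha]
    rw [show 1 - a + a = 1 by ring, ENNReal.ofReal_one]
  · have h1 : ENNReal.ofReal (1 - a) = 0 := ENNReal.ofReal_of_nonpos (by linarith)
    rw [h1, zero_add, ← ENNReal.ofReal_one, ← ENNReal.ofReal_add (by linarith) (by norm_num)]
    rw [show a - 1 + 1 = a by ring]

theorem id_two (a : ℝ) :
    ENNReal.ofReal (1 - a) + ENNReal.ofReal (a - 1) = ENNReal.ofReal |1 - a| := by
  rcases le_total a 1 with h | h
  · have h1 : ENNReal.ofReal (a - 1) = 0 := ENNReal.ofReal_of_nonpos (by linarith)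
    rw [h1, add_zero, abs_of_nonneg (by linarith)]
  · have h1 : ENNReal.ofReal (1 - a) = 0 := ENNReal.ofReal_of_nonpos (by linarith)
    rw [h1, zero_add, abs_of_nonpos (by linarith)]
    congr 1
    ring

theorem id_three (a : ℝ) (ha : 0 ≤ a) :
    ENNReal.ofReal |1 - a| ^ 2 + ENNReal.ofReal (2 * a)
      = 1 + ENNReal.ofReal (a ^ 2) := by
  rw [← ENNReal.ofReal_pow (abs_nonneg _), sq_abs,
    ← ENNReal.ofReal_add (by positivity) (by positivity), ← ENNReal.ofReal_one,
    ← ENNReal.ofReal_add (by norm_num) (by positivity)]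
  congr 1
  ring

theorem pointwise_one_le (a : ℝ) (ha : 0 ≤ a) :
    1 ≤ ENNReal.ofReal a + ENNReal.ofReal (1 - a) := by
  rcases le_total a 1 with h | h
  · rw [← ENNReal.ofReal_add ha (by linarith)]
    rw [show a + (1 - a) = 1 by ring, ENNReal.ofReal_one]
  · calc (1:ENNReal) ≤ ENNReal.ofReal a := by
          rw [ENNReal.one_le_ofReal]; exact h
      _ ≤ _ := le_self_add

end Endgame

/-- **Lemma (testing lower bound).** If `‖μ*‖ ≤ n^{−1/4}`, then any Borel test
`ψ : (ℝ^d)^n → {0,1}` of `H₀ : P = N_d(0, I_d)` against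
`H₁ : P = (1/2)N_d(μ*, I_d) + (1/2)N_d(−μ*, I_d)`, based on `n` i.i.d. observations,
has sum of error probabilities exceeding `1/2`. -/
theorem testing_lower_bound_gaussian_mixture
    (d n : ℕ) (μstar : EuclideanSpace ℝ (Fin d))
    (hμ : ‖μstar‖ ≤ (n : ℝ) ^ (-(1 / 4 : ℝ)))
    (ψ : (Fin n → EuclideanSpace ℝ (Fin d)) → Bool)
    (hψ : Measurable ψ) :
    (1 : ENNReal) / 2 <
      (Measure.pi fun _ : Fin n => gaussianId d 0) {x | ψ x = true} +
      (Measure.pi fun _ : Fin n => gaussianMixture d μstar) {x | ψ x = false} := by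
  classical
  set ν0n := Measure.pi fun _ : Fin n => gaussianId d 0 with hν0n
  have hν0nuniv : ν0n Set.univ = 1 := by
    rw [hν0n, Measure.pi_univ]
    simp [measure_univ]
  -- the real density
  set F : (Fin n → EuclideanSpace ℝ (Fin d)) → ℝ := fun x => ∏ i, gdens μstar (x i) with hF
  have hFnonneg : ∀ x, 0 ≤ F x := fun x => Finset.prod_nonneg fun i _ => gdens_nonneg _ _
  have hgreal : Measurable (gdens μstar) := by
    apply Measurable.div_const
    apply Measurable.add
    · exact Real.measurable_exp.comp
        ((continuous_id.inner continuous_const).measurable.sub_const _)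
    · exact Real.measurable_exp.comp
        ((continuous_id.inner continuous_const).measurable.sub_const _)
  have hFmeas : Measurable F :=
    Finset.measurable_prod _ fun i _ => hgreal.comp (measurable_pi_apply i)
  have hGd : ∀ x, (∏ i, ENNReal.ofReal (gdens μstar (x i))) = ENNReal.ofReal (F x) := by
    intro x
    rw [hF, ENNReal.ofReal_prod_of_nonneg fun i _ => gdens_nonneg _ _]
  -- the test set
  set A : Set (Fin n → EuclideanSpace ℝ (Fin d)) := {x | ψ x = true} with hA
  have hAmeas : MeasurableSet A := hψ (measurableSet_singleton true)
  have hfalse : {x | ψ x = false} = Aᶜ := by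
    ext x
    cases h : ψ x <;> simp [hA, h]
  -- rewrite the alternative measure
  rw [hfalse, pi_mixture_eq_withDensity μstar, withDensity_apply _ hAmeas.compl]
  simp_rw [hGd]
  -- moments
  have hM1 : ∫⁻ x, ENNReal.ofReal (F x) ∂ν0n = 1 := by
    have := lintegral_pi_gdens (n := n) μstar
    simp_rw [hGd] at this
    exact this
  have hM2 : ∫⁻ x, ENNReal.ofReal (F x) ^ 2 ∂ν0n
      = ENNReal.ofReal (Real.cosh (‖μstar‖ ^ 2)) ^ n := by
    have := lintegral_pi_gdens_sq (n := n) μstar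
    simp_rw [hGd] at this
    exact this
  -- define P, M, S, S2
  set P := ∫⁻ x, ENNReal.ofReal (1 - F x) ∂ν0n with hP
  set M := ∫⁻ x, ENNReal.ofReal (F x - 1) ∂ν0n with hM
  set S := ∫⁻ x, ENNReal.ofReal |1 - F x| ∂ν0n with hS
  set S2 := ∫⁻ x, ENNReal.ofReal |1 - F x| ^ 2 ∂ν0n with hS2
  have hmeas1F : Measurable fun x => ENNReal.ofReal (1 - F x) :=
    ENNReal.measurable_ofReal.comp ((measurable_const.sub hFmeas))
  have hmeasF1 : Measurable fun x => ENNReal.ofReal (F x - 1) :=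
    ENNReal.measurable_ofReal.comp ((hFmeas.sub measurable_const))
  have hmeasAbs : Measurable fun x => ENNReal.ofReal |1 - F x| :=
    ENNReal.measurable_ofReal.comp (measurable_const.sub hFmeas).abs
  have hmeasOF : Measurable fun x => ENNReal.ofReal (F x) :=
    ENNReal.measurable_ofReal.comp hFmeas
  -- (2) P = M
  have hPM : P = M := by
    have e1 : P + 1 = ∫⁻ x, (ENNReal.ofReal (1 - F x) + ENNReal.ofReal (F x)) ∂ν0n := by
      rw [lintegral_add_left hmeas1F, hM1]
    have e2 : M + 1 = ∫⁻ x, (ENNReal.ofReal (F x - 1) + 1) ∂ν0n := by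
      rw [lintegral_add_left hmeasF1, lintegral_one, hν0nuniv]
    have hsum : P + 1 = M + 1 := by
      rw [e1, e2]
      exact lintegral_congr fun x => id_one (F x) (hFnonneg x)
    exact WithTop.add_right_cancel ENNReal.one_ne_top hsum
  -- (3) P + M = S
  have hPMS : P + M = S := by
    rw [hP, hM, hS, ← lintegral_add_left hmeas1F]
    exact lintegral_congr fun x => id_two (F x)
  -- (5) S2 + 2 = 1 + cosh^n
  have h2F : ∫⁻ x, ENNReal.ofReal (2 * F x) ∂ν0n = 2 := by
    have hpt : ∀ x, ENNReal.ofReal (2 * F x) = 2 * ENNReal.ofReal (F x) := fun x => by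
      rw [ENNReal.ofReal_mul (by norm_num)]
      norm_num
    simp_rw [hpt]
    rw [lintegral_const_mul _ hmeasOF, hM1, mul_one]
  have hS2eq : S2 + 2 = 1 + ENNReal.ofReal (Real.cosh (‖μstar‖ ^ 2)) ^ n := by
    have e3 : S2 + 2 = ∫⁻ x, (ENNReal.ofReal |1 - F x| ^ 2 + ENNReal.ofReal (2 * F x)) ∂ν0n := by
      rw [lintegral_add_left (hmeasAbs.pow_const 2), h2F]
    have e4 : ∫⁻ x, ((1:ENNReal) + ENNReal.ofReal (F x ^ 2)) ∂ν0n
        = 1 + ENNReal.ofReal (Real.cosh (‖μstar‖ ^ 2)) ^ n := by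
      rw [lintegral_add_left measurable_const, lintegral_one, hν0nuniv]
      congr 1
      rw [← hM2]
      exact lintegral_congr fun x => (ENNReal.ofReal_pow (hFnonneg x) 2)
    rw [e3, ← e4]
    exact lintegral_congr fun x => id_three (F x) (hFnonneg x)
  -- numeric bound: cosh^n ≤ exp(1/2) < 2
  have hnt : (n : ℝ) * (‖μstar‖ ^ 2) ^ 2 ≤ 1 := by
    have h4 : ‖μstar‖ ^ 4 ≤ ((n:ℝ) ^ (-(1/4 : ℝ))) ^ 4 :=
      pow_le_pow_left₀ (norm_nonneg _) hμ 4
    have h5 : ((n:ℝ) ^ (-(1/4 : ℝ))) ^ 4 = (n:ℝ) ^ (-1 : ℝ) := by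
      rw [← Real.rpow_natCast ((n:ℝ) ^ (-(1/4:ℝ))) 4, ← Real.rpow_mul (Nat.cast_nonneg n)]
      norm_num
    rcases eq_or_ne (n:ℝ) 0 with h0 | h0
    · rw [h0]; norm_num
    · have : (n:ℝ) * ‖μstar‖ ^ 4 ≤ (n:ℝ) * (n:ℝ) ^ (-1:ℝ) := by
        apply mul_le_mul_of_nonneg_left _ (Nat.cast_nonneg n)
        rw [← h5]; exact h4
      calc (n : ℝ) * (‖μstar‖ ^ 2) ^ 2 = (n:ℝ) * ‖μstar‖ ^ 4 := by ring
        _ ≤ (n:ℝ) * (n:ℝ) ^ (-1:ℝ) := this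
        _ = 1 := by
            rw [Real.rpow_neg_one, mul_inv_cancel₀ h0]
  have hcoshn : Real.cosh (‖μstar‖ ^ 2) ^ n ≤ Real.exp 2⁻¹ := by
    calc Real.cosh (‖μstar‖ ^ 2) ^ n ≤ (Real.exp ((‖μstar‖ ^ 2) ^ 2 / 2)) ^ n := by
          apply pow_le_pow_left₀ ((Real.cosh_pos (x := ‖μstar‖ ^ 2)).le) (Real.cosh_le_exp_half_sq _)
      _ = Real.exp ((n:ℝ) * ((‖μstar‖ ^ 2) ^ 2 / 2)) := by
          rw [← Real.exp_nat_mul]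
      _ ≤ Real.exp 2⁻¹ := by
          apply Real.exp_le_exp.2
          rw [show ((n:ℝ) * ((‖μstar‖ ^ 2) ^ 2 / 2)) = ((n:ℝ) * (‖μstar‖ ^ 2) ^ 2) / 2 by ring]
          linarith [hnt]
  have hexp_lt_two : Real.exp 2⁻¹ < 2 := by
    have h1 : Real.exp 2⁻¹ ^ 2 = Real.exp 1 := by
      rw [← Real.exp_nat_mul]; norm_num
    have h2 : Real.exp 1 < 2.7182818286 := Real.exp_one_lt_d9
    nlinarith [Real.exp_pos (2⁻¹ : ℝ)]
  set β : ℝ := Real.exp 2⁻¹ - 1 with hβ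
  have hβpos : 0 ≤ β := by
    rw [hβ]
    have := Real.one_le_exp (by norm_num : (0:ℝ) ≤ 2⁻¹)
    linarith
  have hβlt : β < 1 := by rw [hβ]; linarith
  -- S2 ≤ ofReal β
  have hS2le : S2 ≤ ENNReal.ofReal β := by
    have h1 : S2 + 2 ≤ ENNReal.ofReal β + 2 := by
      rw [hS2eq]
      have : ENNReal.ofReal (Real.cosh (‖μstar‖ ^ 2)) ^ n
          = ENNReal.ofReal (Real.cosh (‖μstar‖ ^ 2) ^ n) := by
        rw [ENNReal.ofReal_pow ((Real.cosh_pos (x := ‖μstar‖ ^ 2)).le)]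
      rw [this]
      calc (1:ENNReal) + ENNReal.ofReal (Real.cosh (‖μstar‖ ^ 2) ^ n)
          ≤ 1 + ENNReal.ofReal (Real.exp 2⁻¹) := by
            exact add_le_add_right (ENNReal.ofReal_le_ofReal hcoshn) 1
        _ = ENNReal.ofReal β + 2 := by
            rw [show Real.exp 2⁻¹ = β + 1 by rw [hβ]; ring,
              ENNReal.ofReal_add hβpos (by norm_num), ENNReal.ofReal_one]
            ring
    exact ENNReal.le_of_add_le_add_right (by norm_num) h1
  -- Cauchy-Schwarz : S ≤ S2^(1/2)
  have hCS : S ≤ S2 ^ (1/2 : ℝ) := by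
    have hconj : Real.HolderConjugate 2 2 := Real.HolderConjugate.two_two
    have := ENNReal.lintegral_mul_le_Lp_mul_Lq ν0n hconj
      (hmeasAbs.aemeasurable) (aemeasurable_const (b := (1:ENNReal)))
    simp only [mul_one, ENNReal.one_rpow, lintegral_const, hν0nuniv] at this
    calc S = ∫⁻ x, ENNReal.ofReal |1 - F x| * 1 ∂ν0n := by simp [hS]
      _ ≤ (∫⁻ x, ENNReal.ofReal |1 - F x| ^ (2:ℝ) ∂ν0n) ^ (1/(2:ℝ))
          * (∫⁻ _x, (1:ENNReal) ^ (2:ℝ) ∂ν0n) ^ (1/(2:ℝ)) := by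
            exact ENNReal.lintegral_mul_le_Lp_mul_Lq ν0n hconj
              (hmeasAbs.aemeasurable) (aemeasurable_const)
      _ = (∫⁻ x, ENNReal.ofReal |1 - F x| ^ (2:ℝ) ∂ν0n) ^ (1/(2:ℝ)) := by
            simp [lintegral_const, hν0nuniv]
      _ = S2 ^ (1/2 : ℝ) := by
            rw [hS2]
            congr 1
            exact lintegral_congr fun x => by
              rw [← ENNReal.rpow_natCast (ENNReal.ofReal |1 - F x|) 2]
              norm_num
  -- conclude S < 1
  have hSlt : S < 1 := by
    calc S ≤ S2 ^ (1/2 : ℝ) := hCS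
      _ ≤ (ENNReal.ofReal β) ^ (1/2 : ℝ) := by
          exact ENNReal.rpow_le_rpow hS2le (by norm_num)
      _ = ENNReal.ofReal (β ^ (1/2 : ℝ)) := by
          rw [← ENNReal.ofReal_rpow_of_nonneg hβpos (by norm_num)]
      _ < 1 := by
          rw [← ENNReal.ofReal_one]
          apply ENNReal.ofReal_lt_ofReal_iff_of_nonneg (by positivity) |>.2
          rcases eq_or_lt_of_le hβpos with h0 | h0
          · rw [← h0]
            rw [Real.zero_rpow (by norm_num)]
            norm_num
          · exact Real.rpow_lt_one hβpos hβlt (by norm_num)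
  -- P < 1/2
  have hPlt : P < 1/2 := by
    have h2P : 2 * P = S := by
      rw [two_mul, hPM]
      nth_rewrite 1 [← hPM]
      exact hPMS
    have : 2 * P < 2 * (1/2 : ENNReal) := by
      rw [h2P]
      rw [show (2:ENNReal) * (1/2) = 1 by
        rw [one_div, ENNReal.mul_inv_cancel (by norm_num) (by norm_num)]]
      exact hSlt
    exact lt_of_mul_lt_mul_left this (by norm_num)
  -- (1) 1 ≤ ν0n A + ∫_{Aᶜ} ofReal F + P
  have hkey : (1:ENNReal) ≤ ν0n A + (∫⁻ x in Aᶜ, ENNReal.ofReal (F x) ∂ν0n) + P := by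
    have h0 : (1:ENNReal) = ∫⁻ x in A, 1 ∂ν0n + ∫⁻ x in Aᶜ, 1 ∂ν0n := by
      rw [lintegral_add_compl _ hAmeas, lintegral_one, hν0nuniv]
    have hA1 : ∫⁻ x in A, (1:ENNReal) ∂ν0n = ν0n A := setLIntegral_one A
    have hcompl : ∫⁻ x in Aᶜ, (1:ENNReal) ∂ν0n
        ≤ ∫⁻ x in Aᶜ, ENNReal.ofReal (F x) ∂ν0n + P := by
      calc ∫⁻ x in Aᶜ, (1:ENNReal) ∂ν0n
          ≤ ∫⁻ x in Aᶜ, (ENNReal.ofReal (F x) + ENNReal.ofReal (1 - F x)) ∂ν0n :=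
            lintegral_mono fun x => pointwise_one_le (F x) (hFnonneg x)
        _ = ∫⁻ x in Aᶜ, ENNReal.ofReal (F x) ∂ν0n
              + ∫⁻ x in Aᶜ, ENNReal.ofReal (1 - F x) ∂ν0n := by
            rw [lintegral_add_left hmeasOF]
        _ ≤ ∫⁻ x in Aᶜ, ENNReal.ofReal (F x) ∂ν0n + P := by
            apply add_le_add_right
            rw [hP]
            exact setLIntegral_le_lintegral _ _
    rw [h0, hA1]
    calc ν0n A + ∫⁻ x in Aᶜ, (1:ENNReal) ∂ν0n
        ≤ ν0n A + (∫⁻ x in Aᶜ, ENNReal.ofReal (F x) ∂ν0n + P) := add_le_add_right hcompl _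
      _ = ν0n A + (∫⁻ x in Aᶜ, ENNReal.ofReal (F x) ∂ν0n) + P := by rw [add_assoc]
  -- finish
  by_contra hcon
  push_neg at hcon
  have h1 : (1:ENNReal) ≤ 1/2 + P :=
    le_trans hkey (add_le_add_left hcon P)
  have h2 : (1/2 : ENNReal) + P < 1/2 + 1/2 :=
    ENNReal.add_lt_add_left (by norm_num) hPlt
  have h3 : (1/2 : ENNReal) + 1/2 = 1 := by
    rw [one_div, ENNReal.inv_two_add_inv_two]
  exact absurd (lt_of_le_of_lt h1 (h2.trans_eq h3)) (lt_irrefl _)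
end

section
/- For any a, b ∈ ℝ, (1/2){tanh(a+b) − tanh(a−b)} ≤ |b|, and (a/2){tanh(a+b) + tanh(a−b)} ≥ a² − a⁴/3 − a²b². -/
/-- `sinh x ≤ x * cosh x` for `x ≥ 0`. -/
lemma aux_sinh_le (x : ℝ) (hx : 0 ≤ x) : Real.sinh x ≤ x * Real.cosh x := by
  have hmono : MonotoneOn (fun x : ℝ => x * Real.cosh x - Real.sinh x) (Set.Ici 0) := by
    apply monotoneOn_of_deriv_nonneg (convex_Ici 0)
    · fun_prop
    · intro y _
      exact (((hasDerivAt_id y).mul (Real.hasDerivAt_cosh y)).sub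
        (Real.hasDerivAt_sinh y)).differentiableAt.differentiableWithinAt
    · intro y hy
      rw [interior_Ici] at hy
      have h : HasDerivAt (fun x : ℝ => x * Real.cosh x - Real.sinh x)
          (1 * Real.cosh y + y * Real.sinh y - Real.cosh y) y :=
        ((hasDerivAt_id y).mul (Real.hasDerivAt_cosh y)).sub (Real.hasDerivAt_sinh y)
      rw [h.deriv]
      have hs := Real.sinh_nonneg_iff.2 hy.le
      nlinarith [mul_nonneg hy.le hs]
  have h0 : (fun x : ℝ => x * Real.cosh x - Real.sinh x) 0 ≤
      (fun x : ℝ => x * Real.cosh x - Real.sinh x) x :=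
    hmono Set.self_mem_Ici hx hx
  simp only [Real.cosh_zero, Real.sinh_zero] at h0
  linarith [h0]

/-- `(x - x³/3) * cosh x ≤ sinh x` for `x ≥ 0`. -/
lemma aux_sinh_ge (x : ℝ) (hx : 0 ≤ x) :
    (x - x ^ 3 / 3) * Real.cosh x ≤ Real.sinh x := by
  have hmono : MonotoneOn
      (fun x : ℝ => Real.sinh x - (x - x ^ 3 / 3) * Real.cosh x) (Set.Ici 0) := by
    apply monotoneOn_of_deriv_nonneg (convex_Ici 0)
    · fun_prop
    · intro y _
      exact ((Real.hasDerivAt_sinh y).sub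
        (((hasDerivAt_id y).sub ((hasDerivAt_pow 3 y).div_const 3)).mul
          (Real.hasDerivAt_cosh y))).differentiableAt.differentiableWithinAt
    · intro y hy
      rw [interior_Ici] at hy
      have h : HasDerivAt (fun x : ℝ => Real.sinh x - (x - x ^ 3 / 3) * Real.cosh x)
          (Real.cosh y - ((1 - (3 : ℕ) * y ^ (3 - 1) / 3) * Real.cosh y +
            (y - y ^ 3 / 3) * Real.sinh y)) y :=
        (Real.hasDerivAt_sinh y).sub
          (((hasDerivAt_id y).sub ((hasDerivAt_pow 3 y).div_const 3)).mul
            (Real.hasDerivAt_cosh y))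
      rw [h.deriv]
      have hs : 0 ≤ Real.sinh y := Real.sinh_nonneg_iff.2 hy.le
      have hA : Real.sinh y ≤ y * Real.cosh y := aux_sinh_le y hy.le
      have hc : 0 < Real.cosh y := Real.cosh_pos y
      have h2 : (y - y ^ 3 / 3) * Real.sinh y ≤ y ^ 2 * Real.cosh y := by
        nlinarith [mul_nonneg (mul_nonneg (mul_nonneg hy.le hy.le) hy.le) hs,
          mul_le_mul_of_nonneg_left hA hy.le]
      push_cast
      nlinarith
  have h0 : (fun x : ℝ => Real.sinh x - (x - x ^ 3 / 3) * Real.cosh x) 0 ≤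
      (fun x : ℝ => Real.sinh x - (x - x ^ 3 / 3) * Real.cosh x) x :=
    hmono Set.self_mem_Ici hx hx
  simp only [Real.cosh_zero, Real.sinh_zero] at h0
  linarith [h0]

/-- `|sinh x| ≤ |x| * cosh x` for all `x`. -/
lemma aux_abs_sinh (x : ℝ) : |Real.sinh x| ≤ |x| * Real.cosh x := by
  rcases le_or_gt 0 x with h | h
  · rw [abs_of_nonneg (Real.sinh_nonneg_iff.2 h), abs_of_nonneg h]
    exact aux_sinh_le x h
  · have h1 := aux_sinh_le (-x) (by linarith)
    rw [Real.sinh_neg, Real.cosh_neg] at h1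
    have h2 : Real.sinh x ≤ 0 := by
      have := Real.sinh_nonneg_iff.2 (neg_nonneg.2 h.le)
      rw [Real.sinh_neg] at this; linarith
    rw [abs_of_nonpos h2, abs_of_neg h]
    linarith

/-- `(x² - x⁴/3) * cosh x ≤ x * sinh x` for all `x`. -/
lemma aux_mul_sinh (x : ℝ) : (x ^ 2 - x ^ 4 / 3) * Real.cosh x ≤ x * Real.sinh x := by
  rcases le_or_gt 0 x with h | h
  · have := aux_sinh_ge x h
    nlinarith
  · have := aux_sinh_ge (-x) (by linarith)
    rw [Real.sinh_neg, Real.cosh_neg] at this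
    nlinarith

/-- **Lemma (tanh inequalities).** For any `a b : ℝ`,
`(1/2)(tanh(a+b) − tanh(a−b)) ≤ |b|` and
`(a/2)(tanh(a+b) + tanh(a−b)) ≥ a² − a⁴/3 − a²b²`. -/
theorem tanh_half_diff_le_abs_and_half_sum_ge (a b : ℝ) :
    (1 / 2) * (Real.tanh (a + b) - Real.tanh (a - b)) ≤ |b| ∧
    (a / 2) * (Real.tanh (a + b) + Real.tanh (a - b)) ≥ a ^ 2 - a ^ 4 / 3 - a ^ 2 * b ^ 2 := by
  set sa := Real.sinh a with hsa
  set ca := Real.cosh a with hca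
  set sb := Real.sinh b with hsb
  set cb := Real.cosh b with hcb
  have hca2 : ca ^ 2 = sa ^ 2 + 1 := Real.cosh_sq a
  have hcb2 : cb ^ 2 = sb ^ 2 + 1 := Real.cosh_sq b
  have hcap : 0 < ca := Real.cosh_pos a
  have hcbp : 0 < cb := Real.cosh_pos b
  have hT : (0:ℝ) < 1 + sa ^ 2 + sb ^ 2 := by positivity
  have hnum_d : Real.sinh (a + b) * Real.cosh (a - b) -
      Real.cosh (a + b) * Real.sinh (a - b) = 2 * sb * cb := by
    rw [Real.sinh_add, Real.sinh_sub, Real.cosh_add, Real.cosh_sub]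
    linear_combination (2 * sb * cb) * hca2
  have hnum_s : Real.sinh (a + b) * Real.cosh (a - b) +
      Real.cosh (a + b) * Real.sinh (a - b) = 2 * sa * ca := by
    rw [Real.sinh_add, Real.sinh_sub, Real.cosh_add, Real.cosh_sub]
    linear_combination (2 * sa * ca) * hcb2
  have hden : Real.cosh (a + b) * Real.cosh (a - b) = 1 + sa ^ 2 + sb ^ 2 := by
    rw [Real.cosh_add, Real.cosh_sub]
    linear_combination cb ^ 2 * hca2 + (sa ^ 2 + 1) * hcb2
  have hdiff : Real.tanh (a + b) - Real.tanh (a - b) =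
      2 * sb * cb / (1 + sa ^ 2 + sb ^ 2) := by
    rw [Real.tanh_eq_sinh_div_cosh, Real.tanh_eq_sinh_div_cosh,
      div_sub_div _ _ (Real.cosh_pos (a + b)).ne' (Real.cosh_pos (a - b)).ne',
      hnum_d, hden]
  have hsum : Real.tanh (a + b) + Real.tanh (a - b) =
      2 * sa * ca / (1 + sa ^ 2 + sb ^ 2) := by
    rw [Real.tanh_eq_sinh_div_cosh, Real.tanh_eq_sinh_div_cosh,
      div_add_div _ _ (Real.cosh_pos (a + b)).ne' (Real.cosh_pos (a - b)).ne',
      hnum_s, hden]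
  constructor
  · rw [hdiff]
    have h1 : |sb| ≤ |b| * cb := aux_abs_sinh b
    have h2 : sb * cb ≤ |b| * (1 + sa ^ 2 + sb ^ 2) := by
      have h3 : sb * cb ≤ |sb| * cb :=
        mul_le_mul_of_nonneg_right (le_abs_self sb) hcbp.le
      have h4 : |sb| * cb ≤ (|b| * cb) * cb := mul_le_mul_of_nonneg_right h1 hcbp.le
      have h5 : (|b| * cb) * cb = |b| * (sb ^ 2 + 1) := by rw [mul_assoc, ← sq, hcb2]
      nlinarith [abs_nonneg b, sq_nonneg sa]
    calc (1:ℝ) / 2 * (2 * sb * cb / (1 + sa ^ 2 + sb ^ 2))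
        = sb * cb / (1 + sa ^ 2 + sb ^ 2) := by ring
      _ ≤ |b| := by rw [div_le_iff₀ hT]; linarith
  · rw [hsum, ge_iff_le]
    have key : (a ^ 2 - a ^ 4 / 3 - a ^ 2 * b ^ 2) * (1 + sa ^ 2 + sb ^ 2) ≤
        a * sa * ca := by
      have h1 : (a ^ 2 - a ^ 4 / 3) * ca ≤ a * sa := aux_mul_sinh a
      have h1' : (a ^ 2 - a ^ 4 / 3) * (sa ^ 2 + 1) ≤ a * sa * ca := by
        have h0 := mul_le_mul_of_nonneg_right h1 hcap.le
        have e : (a ^ 2 - a ^ 4 / 3) * (sa ^ 2 + 1) = (a ^ 2 - a ^ 4 / 3) * ca * ca := by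
          rw [mul_assoc, ← sq, hca2]
        rw [e]; exact h0
      have h2 : sb ^ 2 ≤ b ^ 2 * (sb ^ 2 + 1) := by
        have h3 := aux_abs_sinh b
        have h4 : |sb| ^ 2 ≤ (|b| * cb) ^ 2 := by
          apply sq_le_sq' _ h3
          have := abs_nonneg sb
          have : 0 ≤ |b| * cb := mul_nonneg (abs_nonneg b) hcbp.le
          linarith [abs_nonneg sb]
        rw [sq_abs] at h4
        calc sb ^ 2 ≤ (|b| * cb) ^ 2 := h4
          _ = b ^ 2 * (sb ^ 2 + 1) := by rw [mul_pow, sq_abs, hcb2]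
      have p1 : (a ^ 2 - a ^ 4 / 3) * sb ^ 2 ≤ a ^ 2 * sb ^ 2 :=
        mul_le_mul_of_nonneg_right
          (by nlinarith [sq_nonneg (a ^ 2)] : a ^ 2 - a ^ 4 / 3 ≤ a ^ 2) (sq_nonneg sb)
      have p2 : a ^ 2 * sb ^ 2 ≤ a ^ 2 * (b ^ 2 * (sb ^ 2 + 1)) :=
        mul_le_mul_of_nonneg_left h2 (sq_nonneg a)
      have p3 : a ^ 2 * (b ^ 2 * (sb ^ 2 + 1)) ≤
          a ^ 2 * b ^ 2 * (1 + sa ^ 2 + sb ^ 2) := by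
        have q : a ^ 2 * b ^ 2 * (1 + sa ^ 2 + sb ^ 2) - a ^ 2 * (b ^ 2 * (sb ^ 2 + 1)) =
            a ^ 2 * b ^ 2 * sa ^ 2 := by ring
        have q2 : (0:ℝ) ≤ a ^ 2 * b ^ 2 * sa ^ 2 := by positivity
        linarith
      have id1 : (a ^ 2 - a ^ 4 / 3 - a ^ 2 * b ^ 2) * (1 + sa ^ 2 + sb ^ 2) =
          (a ^ 2 - a ^ 4 / 3) * (sa ^ 2 + 1) + (a ^ 2 - a ^ 4 / 3) * sb ^ 2 -
            a ^ 2 * b ^ 2 * (1 + sa ^ 2 + sb ^ 2) := by ring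
      linarith [h1', p1, p2, p3, id1]
    calc a ^ 2 - a ^ 4 / 3 - a ^ 2 * b ^ 2
        ≤ a * sa * ca / (1 + sa ^ 2 + sb ^ 2) := by rw [le_div_iff₀ hT]; linarith
      _ = a / 2 * (2 * sa * ca / (1 + sa ^ 2 + sb ^ 2)) := by ring
end
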